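/- Let p(t) ∈ F₂[t] be a primitive polynomial of the field F_{2^w} over F₂ (i.e. an irreducible polynomial of degree w whose roots generate the multiplicative group F_{2^w}^×), and let N = 2^w − 1. Work in the Laurent polynomial ring R = F₂[x^{±1}, y^{±1}]. If x^a y^b − 1 lies in the ideal (p(x), p(y)) for integers a, b, then either (a,b)=(0,0), or |a| + |b| ≥ N. -/

import Mathlib

open AddMonoidAlgebra Polynomial

section aux
variable {K : Type*} [Field K] [Algebra (ZMod 2) K]

noncomputable def myF (u v : Kˣ) : Multiplicative (ℤ × ℤ) →* K where
  toFun g := ((u ^ (Multiplicative.toAdd g).1 * v ^ (Multiplicative.toAdd g).2 : Kˣ) : K)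
  map_one' := by simp
  map_mul' x y := by
    simp only [toAdd_mul, Prod.fst_add, Prod.snd_add]
    push_cast
    rw [zpow_add₀ u.ne_zero, zpow_add₀ v.ne_zero]
    ring

omit [Algebra (ZMod 2) K] in
lemma myF_ofAdd (u v : Kˣ) (m n : ℤ) :
    myF u v (Multiplicative.ofAdd (m, n)) = ((u ^ m * v ^ n : Kˣ) : K) := rfl

lemma key_lemma (p : (ZMod 2)[X]) (u v : Kˣ) (a b : ℤ)
    (hu : aeval (u : K) p = 0) (hv : aeval (v : K) p = 0)
    (hmem :
      (AddMonoidAlgebra.single (a, b) (1 : ZMod 2) - 1 :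
          AddMonoidAlgebra (ZMod 2) (ℤ × ℤ)) ∈
        Ideal.span
          {Polynomial.aeval
              (AddMonoidAlgebra.single ((1 : ℤ), (0 : ℤ)) (1 : ZMod 2) :
                AddMonoidAlgebra (ZMod 2) (ℤ × ℤ)) p,
            Polynomial.aeval
              (AddMonoidAlgebra.single ((0 : ℤ), (1 : ℤ)) (1 : ZMod 2) :
                AddMonoidAlgebra (ZMod 2) (ℤ × ℤ)) p}) :
    u ^ a * v ^ b = 1 := by
  set φ : AddMonoidAlgebra (ZMod 2) (ℤ × ℤ) →ₐ[ZMod 2] K :=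
    AddMonoidAlgebra.lift (ZMod 2) K (ℤ × ℤ) (myF u v) with hφ
  have hx : φ (AddMonoidAlgebra.single ((1 : ℤ), (0 : ℤ)) (1 : ZMod 2)) = (u : K) := by
    rw [hφ, AddMonoidAlgebra.lift_single, myF_ofAdd]
    simp
  have hy : φ (AddMonoidAlgebra.single ((0 : ℤ), (1 : ℤ)) (1 : ZMod 2)) = (v : K) := by
    rw [hφ, AddMonoidAlgebra.lift_single, myF_ofAdd]
    simp
  have hab : φ (AddMonoidAlgebra.single ((a : ℤ), (b : ℤ)) (1 : ZMod 2)) = ((u ^ a * v ^ b : Kˣ) : K) := by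
    rw [hφ, AddMonoidAlgebra.lift_single, myF_ofAdd]
    simp
  obtain ⟨c, d, hcd⟩ := Ideal.mem_span_pair.mp hmem
  have h1 : φ (Polynomial.aeval
      (AddMonoidAlgebra.single ((1 : ℤ), (0 : ℤ)) (1 : ZMod 2) :
        AddMonoidAlgebra (ZMod 2) (ℤ × ℤ)) p) = 0 := by
    rw [← Polynomial.aeval_algHom_apply, hx, hu]
  have h2 : φ (Polynomial.aeval
      (AddMonoidAlgebra.single ((0 : ℤ), (1 : ℤ)) (1 : ZMod 2) :
        AddMonoidAlgebra (ZMod 2) (ℤ × ℤ)) p) = 0 := by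
    rw [← Polynomial.aeval_algHom_apply, hy, hv]
  have := congrArg φ hcd
  rw [map_add, map_mul, map_mul, h1, h2, map_sub, hab, map_one] at this
  simp only [mul_zero, add_zero, zero_eq_mul] at this
  have hK : ((u ^ a * v ^ b : Kˣ) : K) = 1 := by linear_combination -this
  ext
  simpa using hK

lemma frob_root (w : ℕ) (x : GaloisField 2 w) (q : (ZMod 2)[X]) :
    aeval (x ^ 2) q = (aeval x q) ^ 2 := by
  have h := Polynomial.hom_eval₂ q (algebraMap (ZMod 2) (GaloisField 2 w))
    (frobenius (GaloisField 2 w) 2) x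
  rw [show (frobenius (GaloisField 2 w) 2).comp (algebraMap (ZMod 2) (GaloisField 2 w)) =
      algebraMap _ _ from Subsingleton.elim _ _] at h
  simpa [aeval_def, frobenius_def] using h.symm

end aux

theorem statement_8 (w : ℕ) (hw : 1 ≤ w) (θ : (GaloisField 2 w)ˣ)
    (hθ : ∀ z : (GaloisField 2 w)ˣ, z ∈ Subgroup.zpowers θ) (a b : ℤ)
    (hmem :
      (AddMonoidAlgebra.single (a, b) (1 : ZMod 2) - 1 :
          AddMonoidAlgebra (ZMod 2) (ℤ × ℤ)) ∈
        Ideal.span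
          {Polynomial.aeval
              (AddMonoidAlgebra.single ((1 : ℤ), (0 : ℤ)) (1 : ZMod 2) :
                AddMonoidAlgebra (ZMod 2) (ℤ × ℤ))
              (minpoly (ZMod 2) (θ : GaloisField 2 w)),
            Polynomial.aeval
              (AddMonoidAlgebra.single ((0 : ℤ), (1 : ℤ)) (1 : ZMod 2) :
                AddMonoidAlgebra (ZMod 2) (ℤ × ℤ))
              (minpoly (ZMod 2) (θ : GaloisField 2 w))}) :
    (a = 0 ∧ b = 0) ∨ 2 ^ w - 1 ≤ a.natAbs + b.natAbs := by
  set K := GaloisField 2 w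
  set p := minpoly (ZMod 2) (θ : K) with hp
  have hu : aeval ((θ : Kˣ) : K) p = 0 := minpoly.aeval _ _
  have hv2 : aeval (((θ ^ 2 : Kˣ)) : K) p = 0 := by
    push_cast
    rw [frob_root, hu]
    ring
  have h1 : (θ : Kˣ) ^ a * (θ : Kˣ) ^ b = 1 := key_lemma p θ θ a b hu hu hmem
  have h2 : (θ : Kˣ) ^ a * (θ ^ 2 : Kˣ) ^ b = 1 := key_lemma p θ (θ ^ 2) a b hu hv2 hmem
  have hz1 : θ ^ (a + b) = 1 := by rw [zpow_add]; exact h1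
  have hz2 : θ ^ (a + 2 * b) = 1 := by
    rw [show a + 2 * b = a + (2 : ℤ) * b from rfl, zpow_add, zpow_mul]
    simpa using h2
  have hN : orderOf θ = 2 ^ w - 1 := by
    rw [orderOf_eq_card_of_forall_mem_zpowers hθ, Nat.card_units,
      GaloisField.card 2 w (by omega)]
  have hd1 : ((2 ^ w - 1 : ℕ) : ℤ) ∣ a + b := by
    rw [← hN]; exact orderOf_dvd_iff_zpow_eq_one.mpr hz1
  have hd2 : ((2 ^ w - 1 : ℕ) : ℤ) ∣ a + 2 * b := by
    rw [← hN]; exact orderOf_dvd_iff_zpow_eq_one.mpr hz2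
  have hdb : ((2 ^ w - 1 : ℕ) : ℤ) ∣ b := by
    have := dvd_sub hd2 hd1
    simpa [add_sub_add_left_eq_sub, two_mul] using this
  have hda : ((2 ^ w - 1 : ℕ) : ℤ) ∣ a := by
    have := dvd_sub hd1 hdb
    simpa using this
  rcases eq_or_ne a 0 with ha | ha
  · rcases eq_or_ne b 0 with hb | hb
    · exact Or.inl ⟨ha, hb⟩
    · right
      have : 2 ^ w - 1 ∣ b.natAbs := by
        have h := Int.natAbs_dvd_natAbs.mpr hdb; rwa [Int.natAbs_natCast] at h
      have := Nat.le_of_dvd (Int.natAbs_pos.mpr hb) this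
      omega
  · right
    have : 2 ^ w - 1 ∣ a.natAbs := by
      have h := Int.natAbs_dvd_natAbs.mpr hda; rwa [Int.natAbs_natCast] at h
    have := Nat.le_of_dvd (Int.natAbs_pos.mpr ha) this
    omega
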